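/- Let n be even, g = (a,b) and h = (c,d) in ℤ₂×ℤ₂, and 1 ≤ p < q ≤ n/2. Then the twisted string order parameter equals the twist phase times the product of the global symmetry and the string order parameter: T_{[p,q]}^{(g,h)} = (−1)^{ad−bc} · U(h) · S_{[p,q]}(g) as 2^n×2^n matrices (where (−1)^{ad−bc} = (−1)^{ad+bc}). -/

import Mathlib

open Matrix Complex
open scoped ComplexOrder

noncomputable section

/-- The state space of `n` qubits, as functions on classical bit strings. -/
abbrev QState (n : ℕ) := (Fin n → Fin 2) → ℂ

/-- Operators on `n` qubits: `2^n × 2^n` complex matrices. -/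
abbrev Op (n : ℕ) := Matrix (Fin n → Fin 2) (Fin n → Fin 2) ℂ

/-- The single-qubit Pauli `X` matrix. -/
def Xmat : Matrix (Fin 2) (Fin 2) ℂ := !![0, 1; 1, 0]

/-- The single-qubit Pauli `Z` matrix. -/
def Zmat : Matrix (Fin 2) (Fin 2) ℂ := !![1, 0; 0, -1]

/-- Map a 1-based cyclic site label `j ∈ {1,…,n}` (taken mod `n`) to an index in `Fin n`. -/
def site (n : ℕ) [NeZero n] (j : ℕ) : Fin n :=
  ⟨(j + (n - 1)) % n, Nat.mod_lt _ (Nat.pos_of_ne_zero (NeZero.ne n))⟩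

/-- The operator acting as the single-qubit matrix `M` on qubit `i` and as identity elsewhere. -/
def onSite (n : ℕ) (i : Fin n) (M : Matrix (Fin 2) (Fin 2) ℂ) : Op n :=
  Matrix.of fun s t => (if ∀ k, k ≠ i → s k = t k then 1 else 0) * M (s i) (t i)

/-- Pauli `X` on (1-based, cyclic) site `j`. -/
def PX (n : ℕ) [NeZero n] (j : ℕ) : Op n := onSite n (site n j) Xmat

/-- Pauli `Z` on (1-based, cyclic) site `j`. -/
def PZ (n : ℕ) [NeZero n] (j : ℕ) : Op n := onSite n (site n j) Zmat

/-- The cyclic cluster stabilizer `K_j = Z_{j-1} X_j Z_{j+1}` (for `1 ≤ j ≤ n`). -/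
def Kstab (n : ℕ) [NeZero n] (j : ℕ) : Op n := PZ n (j - 1) * PX n j * PZ n (j + 1)

/-- The symmetry group `ℤ₂ × ℤ₂`. -/
abbrev G2 := ZMod 2 × ZMod 2

/-- The nontrivial element `x = (0,1)` of `ℤ₂ × ℤ₂`. -/
def gx : G2 := (0, 1)

/-- The nontrivial element `y = (1,0)` of `ℤ₂ × ℤ₂`. -/
def gy : G2 := (1, 0)

/-- The nontrivial element `z = (1,1)` of `ℤ₂ × ℤ₂`. -/
def gz : G2 := (1, 1)

/-- The global symmetry representation `U((a,b)) = ∏_{j odd} X_j^a ∏_{j even} X_j^b`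
on `n` qubits (`n` even), written as a product over the `n/2` two-site blocks. -/
def Usym (n : ℕ) [NeZero n] (g : G2) : Op n :=
  ((List.range (n / 2)).map
    (fun p => PX n (2 * p + 1) ^ g.1.val * PX n (2 * p + 2) ^ g.2.val)).prod

/-- Left boundary operator `V^L_p((a,b))`: `Z^b` on qubit `2p-1` and `X^b Z^a` on qubit `2p`. -/
def VL (n : ℕ) [NeZero n] (p : ℕ) (g : G2) : Op n :=
  PZ n (2 * p - 1) ^ g.2.val * (PX n (2 * p) ^ g.2.val * PZ n (2 * p) ^ g.1.val)

/-- Right boundary operator `V^R_p((a,b))`: `Z^b X^a` on qubit `2p-1` and `Z^a` on qubit `2p`. -/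
def VR (n : ℕ) [NeZero n] (p : ℕ) (g : G2) : Op n :=
  (PZ n (2 * p - 1) ^ g.2.val * PX n (2 * p - 1) ^ g.1.val) * PZ n (2 * p) ^ g.1.val

/-- Truncated symmetry `U_{[p,q]}((a,b)) = ∏_{r=p+1}^{q-1} X_{2r-1}^a X_{2r}^b`. -/
def Ustr (n : ℕ) [NeZero n] (p q : ℕ) (g : G2) : Op n :=
  ((List.range (q - (p + 1))).map
    (fun r => PX n (2 * (p + 1 + r) - 1) ^ g.1.val * PX n (2 * (p + 1 + r)) ^ g.2.val)).prod

/-- The string order parameter `S_{[p,q]}(g) = V^L_p(g) · U_{[p,q]}(g) · V^R_q(g)`. -/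
def SOPm (n : ℕ) [NeZero n] (p q : ℕ) (g : G2) : Op n :=
  VL n p g * Ustr n p q g * VR n q g

/-- The twisted string order parameter
`T_{[p,q]}^{(g,h)} = V^R_q(g) · U(h) · V^L_p(g) · U_{[p,q]}(g)`. -/
def TSOP (n : ℕ) [NeZero n] (p q : ℕ) (g h : G2) : Op n :=
  VR n q g * Usym n h * VL n p g * Ustr n p q g

/-- The triangle-game winning operator
`O_{g,h} = (1/32)(12·1 + 12 U(g) + U(h) + U(gh) − 3T − 3U(g)T)` with `T = T_{[1,n/6+1]}^{(g,h)}`. -/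
def Owin (n : ℕ) [NeZero n] (g h : G2) : Op n :=
  (32 : ℂ)⁻¹ • (12 • (1 : Op n) + 12 • Usym n g + Usym n h + Usym n (g + h)
    - 3 • TSOP n 1 (n / 6 + 1) g h - 3 • (Usym n g * TSOP n 1 (n / 6 + 1) g h))

/-- The `n`-fold tensor product `|+⟩^{⊗n}`, with all amplitudes `(1/√2)^n`. -/
def plusState (n : ℕ) : QState n := fun _ => (((Real.sqrt 2)⁻¹ : ℝ) : ℂ) ^ n

/-- The controlled-`Z` gate between (1-based, cyclic) sites `j` and `k`. -/
def CZm (n : ℕ) [NeZero n] (j k : ℕ) : Op n :=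
  Matrix.of fun s t =>
    if s = t then (if s (site n j) = 1 ∧ s (site n k) = 1 then -1 else 1) else 0

/-- The `n`-qubit cyclic cluster state `|C_n⟩ = (∏_{j=1}^n CZ_{j,j+1}) |+⟩^{⊗n}`. -/
def cluster (n : ℕ) [NeZero n] : QState n :=
  (((List.range n).map (fun j => CZm n (j + 1) (j + 2))).prod).mulVec (plusState n)

section Aux

set_option linter.unusedSectionVars false

variable {n : ℕ} [NeZero n]

lemma sum_update (s : Fin n → Fin 2) (i : Fin n) (F : (Fin n → Fin 2) → ℂ)
    (hF : ∀ u, ¬(∀ k, k ≠ i → s k = u k) → F u = 0) :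
    ∑ v : Fin 2, F (Function.update s i v) = ∑ u, F u := by
  refine Finset.sum_of_injOn (fun v => Function.update s i v)
    (fun a _ b _ hab => by simpa using congrFun hab i)
    (fun v _ => Finset.mem_univ _) ?_ (fun v _ => rfl)
  intro u _ hu
  refine hF u fun hk => hu ?_
  refine ⟨u i, Finset.mem_coe.mpr (Finset.mem_univ _), ?_⟩
  funext k
  by_cases h : k = i
  · subst h; simp
  · simp [Function.update_of_ne h, (hk k h).symm]

lemma onSite_one (i : Fin n) : onSite n i 1 = 1 := by
  ext s t
  simp only [onSite, Matrix.of_apply, Matrix.one_apply]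
  by_cases h : s = t
  · subst h; simp
  · have h1 : ¬ (∀ k, k ≠ i → s k = t k) ∨ ¬ (s i = t i) := by
      by_contra hc
      push_neg at hc
      exact h (funext fun k => by
        by_cases hk : k = i
        · subst hk; exact hc.2
        · exact hc.1 k hk)
    rcases h1 with h1 | h1
    · simp [h1, h]
    · simp [h1, h, if_neg h1]

lemma onSite_mul (i : Fin n) (M N : Matrix (Fin 2) (Fin 2) ℂ) :
    onSite n i M * onSite n i N = onSite n i (M * N) := by
  ext s t
  simp only [onSite, Matrix.mul_apply, Matrix.of_apply]
  by_cases h : ∀ k, k ≠ i → s k = t k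
  · rw [if_pos h, one_mul]
    rw [← sum_update s i _ (fun u hu => by
      have : ¬ ∀ k, k ≠ i → s k = u k := fun hk => hu hk
      simp [this])]
    refine Finset.sum_congr rfl fun v _ => ?_
    have h1 : ∀ k, k ≠ i → s k = Function.update s i v k := fun k hk => by
      simp [Function.update_of_ne hk]
    have h2 : ∀ k, k ≠ i → Function.update s i v k = t k := fun k hk => by
      simp [Function.update_of_ne hk, h k hk]
    rw [if_pos h1, if_pos h2]
    simp
  · rw [if_neg h, zero_mul]
    refine Finset.sum_eq_zero fun u _ => ?_
    by_cases h1 : ∀ k, k ≠ i → s k = u k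
    · have h2 : ¬ ∀ k, k ≠ i → u k = t k := fun h2 =>
        h fun k hk => (h1 k hk).trans (h2 k hk)
      simp [h2]
    · simp [h1]

lemma onSite_smul (i : Fin n) (c : ℂ) (M : Matrix (Fin 2) (Fin 2) ℂ) :
    onSite n i (c • M) = c • onSite n i M := by
  ext s t
  simp [onSite]
  try ring

lemma onSite_pow (i : Fin n) (M : Matrix (Fin 2) (Fin 2) ℂ) (k : ℕ) :
    onSite n i M ^ k = onSite n i (M ^ k) := by
  induction k with
  | zero => simp [onSite_one]
  | succ k ih => rw [pow_succ, pow_succ, ih, onSite_mul]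

lemma onSite_mul_ne {i j : Fin n} (hij : i ≠ j) (M N : Matrix (Fin 2) (Fin 2) ℂ) :
    onSite n i M * onSite n j N =
      Matrix.of fun s t =>
        (if ∀ k, k ≠ i → k ≠ j → s k = t k then 1 else 0) * M (s i) (t i) * N (s j) (t j) := by
  ext s t
  simp only [onSite, Matrix.mul_apply, Matrix.of_apply]
  rw [Finset.sum_eq_single (Function.update s i (t i))]
  · have e1 : ∀ k, k ≠ i → s k = Function.update s i (t i) k := fun k hk => by
      simp [Function.update_of_ne hk]
    have ei : Function.update s i (t i) i = t i := by simp
    have ej : Function.update s i (t i) j = s j := by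
      simp [Function.update_of_ne (Ne.symm hij)]
    rw [if_pos e1, ei, ej, one_mul]
    by_cases h : ∀ k, k ≠ i → k ≠ j → s k = t k
    · have h2 : ∀ k, k ≠ j → Function.update s i (t i) k = t k := fun k hk => by
        by_cases hki : k = i
        · subst hki; simp
        · simp [Function.update_of_ne hki, h k hki hk]
      rw [if_pos h2, if_pos h]
      ring
    · have h2 : ¬ ∀ k, k ≠ j → Function.update s i (t i) k = t k := by
        intro h2
        exact h fun k hki hkj => by
          have := h2 k hkj
          rwa [Function.update_of_ne hki] at this
      rw [if_neg h2, if_neg h]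
      ring
  · intro u _ hu
    by_cases h1 : ∀ k, k ≠ i → s k = u k
    · by_cases h2 : ∀ k, k ≠ j → u k = t k
      · exfalso
        apply hu
        funext k
        by_cases hki : k = i
        · subst hki; simp [h2 k hij]
        · simp [Function.update_of_ne hki, (h1 k hki).symm]
      · simp [h2]
    · simp [h1]
  · simp

lemma onSite_comm {i j : Fin n} (hij : i ≠ j) (M N : Matrix (Fin 2) (Fin 2) ℂ) :
    onSite n i M * onSite n j N = onSite n j N * onSite n i M := by
  rw [onSite_mul_ne hij, onSite_mul_ne hij.symm]
  ext s t
  simp only [Matrix.of_apply]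
  have : (∀ k, k ≠ i → k ≠ j → s k = t k) ↔ (∀ k, k ≠ j → k ≠ i → s k = t k) :=
    ⟨fun h k h1 h2 => h k h2 h1, fun h k h1 h2 => h k h2 h1⟩
  rw [if_congr this rfl rfl]
  ring

lemma two_site {i j : Fin n} (hij : i ≠ j) (M N M' N' : Matrix (Fin 2) (Fin 2) ℂ) :
    (onSite n i M * onSite n j N) * (onSite n i M' * onSite n j N') =
      onSite n i (M * M') * onSite n j (N * N') := by
  rw [mul_assoc, ← mul_assoc (onSite n j N), onSite_comm hij.symm, mul_assoc,
    onSite_mul, ← mul_assoc, onSite_mul]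

lemma ZX_anticomm : Zmat * Xmat = -(Xmat * Zmat) := by
  ext i j
  fin_cases i <;> fin_cases j <;>
    simp [Xmat, Zmat, Matrix.mul_apply, Fin.sum_univ_two]

lemma Z_mul_X_pow (k : ℕ) : Zmat * Xmat ^ k = ((-1 : ℂ) ^ k) • (Xmat ^ k * Zmat) := by
  induction k with
  | zero => simp
  | succ k ih =>
    rw [pow_succ, ← mul_assoc, ih, smul_mul_assoc, mul_assoc, ZX_anticomm, pow_succ]
    rw [mul_neg, smul_neg, ← neg_smul, ← mul_assoc]
    ring_nf
    try rw [mul_comm ((-1:ℂ)^k)]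

lemma Z_pow_mul_X_pow (m k : ℕ) :
    Zmat ^ m * Xmat ^ k = ((-1 : ℂ) ^ (m * k)) • (Xmat ^ k * Zmat ^ m) := by
  induction m with
  | zero => simp
  | succ m ih =>
    rw [pow_succ, mul_assoc, Z_mul_X_pow, mul_smul_comm, ← mul_assoc, ih, smul_mul_assoc,
      smul_smul, ← pow_add, mul_assoc]
    congr 1
    ring_nf

lemma site_val {j : ℕ} (h1 : 1 ≤ j) (h2 : j ≤ n) : (site n j).val = j - 1 := by
  have hn : 1 ≤ n := Nat.one_le_iff_ne_zero.mpr (NeZero.ne n)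
  have : j + (n - 1) = (j - 1) + 1 * n := by omega
  simp only [site, this, Nat.add_mul_mod_self_right]
  exact Nat.mod_eq_of_lt (by omega)

lemma site_ne {j k : ℕ} (h1 : 1 ≤ j) (h2 : j ≤ n) (h3 : 1 ≤ k) (h4 : k ≤ n) (hjk : j ≠ k) :
    site n j ≠ site n k := by
  intro h
  have := congrArg Fin.val h
  rw [site_val h1 h2, site_val h3 h4] at this
  omega

lemma PX_pow (j k : ℕ) : PX n j ^ k = onSite n (site n j) (Xmat ^ k) := onSite_pow _ _ _

lemma PZ_pow (j k : ℕ) : PZ n j ^ k = onSite n (site n j) (Zmat ^ k) := onSite_pow _ _ _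

lemma VR_eq (q : ℕ) (g : G2) :
    VR n q g = onSite n (site n (2 * q - 1)) (Zmat ^ g.2.val * Xmat ^ g.1.val) *
      onSite n (site n (2 * q)) (Zmat ^ g.1.val) := by
  rw [VR, PX_pow, PZ_pow, PZ_pow, onSite_mul]

lemma commute_onSite_onSite {i j : Fin n} (hij : i ≠ j)
    (M N : Matrix (Fin 2) (Fin 2) ℂ) : Commute (onSite n i M) (onSite n j N) :=
  onSite_comm hij M N

/-- `VR n q g` commutes with any two-site `X`-block at sites `2m-1, 2m` with `m ≠ q`. -/
lemma commute_VR_block {q m : ℕ} (hq1 : 1 ≤ q) (hq2 : 2 * q ≤ n) (hm1 : 1 ≤ m)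
    (hm2 : 2 * m ≤ n) (hmq : m ≠ q) (g : G2) (a b : ℕ) :
    Commute (VR n q g) (PX n (2 * m - 1) ^ a * PX n (2 * m) ^ b) := by
  rw [VR_eq, PX_pow, PX_pow]
  have h1 : site n (2 * q - 1) ≠ site n (2 * m - 1) := site_ne (by omega) (by omega) (by omega) (by omega) (by omega)
  have h2 : site n (2 * q - 1) ≠ site n (2 * m) := site_ne (by omega) (by omega) (by omega) (by omega) (by omega)
  have h3 : site n (2 * q) ≠ site n (2 * m - 1) := site_ne (by omega) (by omega) (by omega) (by omega) (by omega)
  have h4 : site n (2 * q) ≠ site n (2 * m) := site_ne (by omega) (by omega) (by omega) (by omega) (by omega)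
  exact ((commute_onSite_onSite h1 _ _).mul_right (commute_onSite_onSite h2 _ _)).mul_left
    ((commute_onSite_onSite h3 _ _).mul_right (commute_onSite_onSite h4 _ _))

lemma conj_aux {A P1 B P2 : Op n} {s : ℂ} (hc1 : Commute A P1) (hc2 : Commute A P2)
    (hb : A * B = s • (B * A)) : A * (P1 * (B * P2)) = s • (P1 * (B * P2) * A) := by
  calc A * (P1 * (B * P2)) = (A * P1) * (B * P2) := (mul_assoc _ _ _).symm
    _ = (P1 * A) * (B * P2) := by rw [hc1.eq]
    _ = P1 * ((A * B) * P2) := by rw [mul_assoc, ← mul_assoc A B]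
    _ = P1 * ((s • (B * A)) * P2) := by rw [hb]
    _ = s • (P1 * (B * (A * P2))) := by
        simp only [smul_mul_assoc, mul_smul_comm, mul_assoc]
    _ = s • (P1 * (B * (P2 * A))) := by rw [hc2.eq]
    _ = s • (P1 * (B * P2) * A) := by rw [← mul_assoc B, ← mul_assoc]

lemma VR_block_sign {q : ℕ} (hq1 : 1 ≤ q) (hq2 : 2 * q ≤ n) (g h : G2) :
    VR n q g * (PX n (2 * q - 1) ^ h.1.val * PX n (2 * q) ^ h.2.val)
      = ((-1 : ℂ) ^ (g.1.val * h.2.val + g.2.val * h.1.val)) •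
        ((PX n (2 * q - 1) ^ h.1.val * PX n (2 * q) ^ h.2.val) * VR n q g) := by
  have hij : site n (2 * q - 1) ≠ site n (2 * q) :=
    site_ne (by omega) (by omega) (by omega) (by omega) (by omega)
  rw [VR_eq, PX_pow, PX_pow, two_site hij, two_site hij]
  have e1 : Zmat ^ g.2.val * Xmat ^ g.1.val * Xmat ^ h.1.val
      = ((-1 : ℂ) ^ (g.2.val * h.1.val)) • (Xmat ^ h.1.val * (Zmat ^ g.2.val * Xmat ^ g.1.val)) := by
    rw [mul_assoc, ((Commute.refl Xmat).pow_pow g.1.val h.1.val).eq, ← mul_assoc,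
      Z_pow_mul_X_pow, smul_mul_assoc, mul_assoc]
  have e2 : Zmat ^ g.1.val * Xmat ^ h.2.val
      = ((-1 : ℂ) ^ (g.1.val * h.2.val)) • (Xmat ^ h.2.val * Zmat ^ g.1.val) :=
    Z_pow_mul_X_pow _ _
  rw [e1, e2, onSite_smul, onSite_smul, smul_mul_assoc, mul_smul_comm, smul_smul, ← pow_add,
    Nat.add_comm (g.2.val * h.1.val)]

lemma VR_mul_Usym {q : ℕ} (hn : Even n) (hq1 : 1 ≤ q) (hq : q ≤ n / 2) (g h : G2) :
    VR n q g * Usym n h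
      = ((-1 : ℂ) ^ (g.1.val * h.2.val + g.2.val * h.1.val)) • (Usym n h * VR n q g) := by
  have hnn : n / 2 * 2 = n := Nat.div_mul_cancel hn.two_dvd
  have hq2 : 2 * q ≤ n := by omega
  set f : ℕ → Op n := fun p' => PX n (2 * p' + 1) ^ h.1.val * PX n (2 * p' + 2) ^ h.2.val with hf
  have hcomm : ∀ p', 1 ≤ p' + 1 → 2 * (p' + 1) ≤ n → p' + 1 ≠ q → Commute (VR n q g) (f p') := by
    intro p' h1 h2 h3
    have e1 : 2 * p' + 1 = 2 * (p' + 1) - 1 := by omega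
    have e2 : 2 * p' + 2 = 2 * (p' + 1) := by omega
    rw [hf]
    simp only [e1, e2]
    exact commute_VR_block hq1 hq2 h1 h2 h3 g _ _
  have hsplit : List.range (n / 2)
      = List.range (q - 1) ++ ([q - 1] ++ (List.range (n / 2 - q)).map (fun r => q + r)) := by
    have h1 : n / 2 = (q - 1) + (1 + (n / 2 - q)) := by omega
    have e2 : List.range (1 + (n / 2 - q)) = [0] ++ (List.range (n / 2 - q)).map (1 + ·) :=
      List.range_add
    conv_lhs => rw [h1, List.range_add, e2]
    simp only [List.map_append, List.map_map, List.map_cons, List.map_nil, Nat.add_zero]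
    congr 2
    exact List.map_congr_left fun r _ => by simp only [Function.comp_apply]; omega
  have hU : Usym n h
      = ((List.range (q - 1)).map f).prod *
        (f (q - 1) * (((List.range (n / 2 - q)).map (fun r => q + r)).map f).prod) := by
    rw [Usym, hsplit]
    simp [List.map_append, List.prod_append]
    rfl
  have hc1 : Commute (VR n q g) (((List.range (q - 1)).map f).prod) := by
    refine Commute.list_prod_right _ _ fun x hx => ?_
    obtain ⟨p', hp', rfl⟩ := List.mem_map.mp hx
    have := List.mem_range.mp hp'
    exact hcomm p' (by omega) (by omega) (by omega)
  have hc2 : Commute (VR n q g) ((((List.range (n / 2 - q)).map (fun r => q + r)).map f).prod) := by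
    refine Commute.list_prod_right _ _ fun x hx => ?_
    obtain ⟨p', hp', rfl⟩ := List.mem_map.mp hx
    obtain ⟨r, hr, rfl⟩ := List.mem_map.mp hp'
    have := List.mem_range.mp hr
    exact hcomm (q + r) (by omega) (by omega) (by omega)
  have hb : VR n q g * f (q - 1)
      = ((-1 : ℂ) ^ (g.1.val * h.2.val + g.2.val * h.1.val)) • (f (q - 1) * VR n q g) := by
    have e1 : 2 * (q - 1) + 1 = 2 * q - 1 := by omega
    have e2 : 2 * (q - 1) + 2 = 2 * q := by omega
    rw [hf]
    simp only [e1, e2]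
    exact VR_block_sign hq1 hq2 g h
  rw [hU]
  exact conj_aux hc1 hc2 hb

lemma commute_VR_VL {p q : ℕ} (hp : 1 ≤ p) (hpq : p < q) (hq2 : 2 * q ≤ n) (g : G2) :
    Commute (VR n q g) (VL n p g) := by
  rw [VR_eq, VL, PZ_pow, PX_pow, PZ_pow, onSite_mul]
  have h1 : site n (2 * q - 1) ≠ site n (2 * p - 1) :=
    site_ne (by omega) (by omega) (by omega) (by omega) (by omega)
  have h2 : site n (2 * q - 1) ≠ site n (2 * p) :=
    site_ne (by omega) (by omega) (by omega) (by omega) (by omega)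
  have h3 : site n (2 * q) ≠ site n (2 * p - 1) :=
    site_ne (by omega) (by omega) (by omega) (by omega) (by omega)
  have h4 : site n (2 * q) ≠ site n (2 * p) :=
    site_ne (by omega) (by omega) (by omega) (by omega) (by omega)
  exact ((commute_onSite_onSite h1 _ _).mul_right (commute_onSite_onSite h2 _ _)).mul_left
    ((commute_onSite_onSite h3 _ _).mul_right (commute_onSite_onSite h4 _ _))

lemma commute_VR_Ustr {p q : ℕ} (hp : 1 ≤ p) (hpq : p < q) (hq2 : 2 * q ≤ n) (g : G2) :
    Commute (VR n q g) (Ustr n p q g) := by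
  refine Commute.list_prod_right _ _ fun x hx => ?_
  obtain ⟨r, hr, rfl⟩ := List.mem_map.mp hx
  have hr' := List.mem_range.mp hr
  have e1 : 2 * (p + 1 + r) - 1 = 2 * (p + 1 + r) - 1 := rfl
  exact commute_VR_block (by omega) hq2 (by omega) (by omega) (by omega) g _ _

end Aux

/-- The twisted string order parameter equals the twist phase times the product of the global
symmetry and the string order parameter:
`T_{[p,q]}^{(g,h)} = (−1)^{ad−bc} U(h) S_{[p,q]}(g)` (with `(−1)^{ad−bc} = (−1)^{ad+bc}`). -/
theorem TSOP_eq_twist_phase_mul (n : ℕ) [NeZero n] (hn : Even n) (p q : ℕ)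
    (hp : 1 ≤ p) (hpq : p < q) (hq : q ≤ n / 2) (g h : G2) :
    TSOP n p q g h
      = ((-1 : ℂ) ^ (g.1.val * h.2.val + g.2.val * h.1.val)) •
          (Usym n h * SOPm n p q g) := by
  have hnn : n / 2 * 2 = n := Nat.div_mul_cancel hn.two_dvd
  have hq1 : 1 ≤ q := by omega
  have hq2 : 2 * q ≤ n := by omega
  have h1 := VR_mul_Usym (n := n) hn hq1 hq g h
  have h2 : Commute (VR n q g) (VL n p g * Ustr n p q g) :=
    (commute_VR_VL hp hpq hq2 g).mul_right (commute_VR_Ustr hp hpq hq2 g)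
  rw [TSOP, SOPm, mul_assoc (VR n q g * Usym n h), h1, smul_mul_assoc, mul_assoc, h2.eq]
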